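/- The occupancy distribution of the multi-rate Erlang loss system satisfies the Kaufman-Roberts recursion: for 1 ≤ c ≤ C, c · g(c) = ∑_{j=1}^J b_j q_j g(c - b_j), where g(c) = ∑_{Q ∈ ℕ^J : ∑_j b_j Q_j = c} ∏_j q_j^{Q_j}/Q_j! and g(c) = 0 for c < 0, g(0) = 1. -/

import Mathlib

open Finset Function

/-- Unnormalized occupancy weight `g(c) = ∑_{Q ∈ ℕ^J : ∑_j b_j Q_j = c} ∏_j q_j^{Q_j}/Q_j!`
of the multi-rate Erlang loss system, extended to integer arguments (so `g(c) = 0` for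
`c < 0`). Since each `b_j ≥ 1`, states contributing to level `c` satisfy `Q_j ≤ c`. -/
noncomputable def occWeight (J : ℕ) (b : Fin J → ℕ) (q : Fin J → ℝ) (c : ℤ) : ℝ :=
  ∑ Q : Fin J → Fin (c.toNat + 1),
    if (∑ j, (b j : ℤ) * ((Q j : ℕ) : ℤ)) = c then
      ∏ j, q j ^ ((Q j : ℕ)) / (Nat.factorial (Q j) : ℝ)
    else 0

noncomputable def krW (J : ℕ) (q : Fin J → ℝ) (Q : Fin J → ℕ) : ℝ :=
  ∏ j, q j ^ Q j / (Nat.factorial (Q j) : ℝ)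

noncomputable def krG (J : ℕ) (b : Fin J → ℕ) (q : Fin J → ℝ) (c : ℤ) (n : ℕ) : ℝ :=
  ∑ Q ∈ Fintype.piFinset (fun _ : Fin J => Finset.range (n+1)),
    if (∑ j, (b j : ℤ) * (Q j : ℤ)) = c then krW J q Q else 0

lemma occWeight_eq_krG (J : ℕ) (b : Fin J → ℕ) (q : Fin J → ℝ) (c : ℤ) :
    occWeight J b q c = krG J b q c c.toNat := by
  unfold occWeight krG krW
  refine Finset.sum_nbij' (fun Q => fun j => (Q j : ℕ))
    (fun Q => fun j => ⟨Q j % (c.toNat + 1), Nat.mod_lt _ (Nat.succ_pos _)⟩)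
    ?_ ?_ ?_ ?_ ?_
  · intro Q _
    simp [Fintype.mem_piFinset, Fin.is_lt]
    exact fun a => Nat.lt_succ_iff.mp (Q a).is_lt
  · intro Q hQ
    simp
  · intro Q hQ
    funext j
    ext
    simp [Nat.mod_eq_of_lt (Q j).is_lt]
  · intro Q hQ
    simp [Fintype.mem_piFinset] at hQ
    funext j
    simp [Nat.mod_eq_of_lt (Nat.lt_succ_of_le (hQ j))]
  · intro Q hQ
    rfl

lemma krG_stable (J : ℕ) (b : Fin J → ℕ) (q : Fin J → ℝ) (c : ℤ)
    (hb : ∀ j, 1 ≤ b j) {n m : ℕ} (hn : (c : ℤ) ≤ n) (hnm : n ≤ m) :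
    krG J b q c m = krG J b q c n := by
  unfold krG
  refine (Finset.sum_subset ?_ ?_).symm
  · intro Q hQ
    simp only [Fintype.mem_piFinset, mem_range] at hQ ⊢
    intro j; exact lt_of_lt_of_le (hQ j) (Nat.succ_le_succ hnm)
  · intro Q hQ hQn
    simp only [Fintype.mem_piFinset, mem_range, not_forall, not_lt] at hQn
    obtain ⟨j, hj⟩ := hQn
    rw [if_neg]
    intro hc
    have h1 : (b j : ℤ) * (Q j : ℤ) ≤ ∑ k, (b k : ℤ) * (Q k : ℤ) :=
      Finset.single_le_sum (f := fun k => (b k : ℤ) * (Q k : ℤ))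
        (fun k _ => by positivity) (mem_univ j)
    have h2 : (n : ℤ) + 1 ≤ (b j : ℤ) * (Q j : ℤ) := by
      have := hb j
      nlinarith [Int.ofNat_le.mpr hj, Int.ofNat_le.mpr this]
    omega

lemma krG_neg (J : ℕ) (b : Fin J → ℕ) (q : Fin J → ℝ) (c : ℤ) (hc : c < 0) (n : ℕ) :
    krG J b q c n = 0 := by
  unfold krG
  refine Finset.sum_eq_zero fun Q _ => ?_
  rw [if_neg]
  intro h
  have : (0:ℤ) ≤ ∑ k, (b k : ℤ) * (Q k : ℤ) :=
    Finset.sum_nonneg fun k _ => by positivity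
  omega

lemma krG_zero (J : ℕ) (b : Fin J → ℕ) (q : Fin J → ℝ) (hb : ∀ j, 1 ≤ b j) :
    krG J b q 0 0 = 1 := by
  unfold krG
  rw [Finset.sum_eq_single (fun _ => 0)]
  · rw [if_pos (by simp)]
    unfold krW
    simp
  · intro Q hQ hne
    rw [if_neg]
    intro h
    apply hne
    funext j
    simp only [Fintype.mem_piFinset, mem_range, Nat.lt_succ_iff, Nat.le_zero] at hQ
    exact hQ j
  · intro h
    exact absurd (by simp [Fintype.mem_piFinset]) h

lemma sum_b_update (J : ℕ) (b : Fin J → ℕ) (Q : Fin J → ℕ) (j : Fin J) (v : ℕ) :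
    ∑ k, (b k : ℤ) * ((Function.update Q j v) k : ℤ)
      = (∑ k, (b k : ℤ) * (Q k : ℤ)) - (b j : ℤ) * (Q j : ℤ) + (b j : ℤ) * v := by
  have h : (fun k => (b k : ℤ) * ((Function.update Q j v) k : ℤ))
      = Function.update (fun k => (b k : ℤ) * (Q k : ℤ)) j ((b j : ℤ) * v) := by
    funext k
    by_cases hk : k = j
    · subst hk; simp
    · simp [Function.update_of_ne hk]
  rw [h, Finset.sum_update_of_mem (mem_univ j)]
  rw [← Finset.sum_erase_add _ _ (mem_univ j), Finset.sdiff_singleton_eq_erase]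
  ring

lemma krW_update (J : ℕ) (q : Fin J → ℝ) (Q : Fin J → ℕ) (j : Fin J) (hQ : Q j ≠ 0) :
    ((Q j : ℕ) : ℝ) * krW J q Q = q j * krW J q (Function.update Q j (Q j - 1)) := by
  obtain ⟨m, hm⟩ := Nat.exists_eq_succ_of_ne_zero hQ
  unfold krW
  have h : (fun k => q k ^ ((Function.update Q j (Q j - 1)) k) /
        (Nat.factorial ((Function.update Q j (Q j - 1)) k) : ℝ))
      = Function.update (fun k => q k ^ Q k / (Nat.factorial (Q k) : ℝ)) j
        (q j ^ (Q j - 1) / (Nat.factorial (Q j - 1) : ℝ)) := by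
    funext k
    by_cases hk : k = j
    · subst hk; simp
    · simp [Function.update_of_ne hk]
  rw [h, Finset.prod_update_of_mem (mem_univ j),
    ← Finset.prod_erase_mul _ _ (mem_univ j), Finset.sdiff_singleton_eq_erase]
  rw [hm]
  simp only [Nat.succ_sub_one]
  have hfac : (Nat.factorial (m + 1) : ℝ) = (m + 1) * Nat.factorial m := by
    push_cast [Nat.factorial_succ]; ring
  have h1 : (Nat.factorial m : ℝ) ≠ 0 := Nat.cast_ne_zero.mpr (Nat.factorial_ne_zero m)
  have h2 : ((m : ℝ) + 1) ≠ 0 := by positivity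
  rw [hfac, pow_succ]
  field_simp
  simp only [Nat.succ_eq_add_one, Nat.cast_add, Nat.cast_one]
  ring

lemma krG_key (J : ℕ) (b : Fin J → ℕ) (q : Fin J → ℝ) (hb : ∀ j, 1 ≤ b j)
    (j : Fin J) (c : ℤ) (hc : 1 ≤ c) :
    ∑ Q ∈ Fintype.piFinset (fun _ : Fin J => Finset.range (c.toNat + 1)),
      (if (∑ k, (b k : ℤ) * (Q k : ℤ)) = c then ((b j : ℝ) * (Q j : ℕ)) * krW J q Q else 0)
    = (b j : ℝ) * q j * krG J b q (c - b j) c.toNat := by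
  set n := c.toNat with hn
  have hcn : (n : ℤ) = c := Int.toNat_of_nonneg (by omega)
  unfold krG
  rw [Finset.mul_sum]
  simp only [mul_ite, mul_zero]
  rw [← Finset.sum_filter, ← Finset.sum_filter]
  -- restrict LHS to Q j ≠ 0
  have hsub : Finset.filter (fun Q => (∑ k, (b k : ℤ) * (Q k : ℤ)) = c ∧ Q j ≠ 0)
        (Fintype.piFinset (fun _ : Fin J => Finset.range (n+1)))
      ⊆ Finset.filter (fun Q => (∑ k, (b k : ℤ) * (Q k : ℤ)) = c)
        (Fintype.piFinset (fun _ : Fin J => Finset.range (n+1))) := by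
    apply Finset.monotone_filter_right
    intro Q _ h
    exact h.1
  have hzero : ∀ Q ∈ Finset.filter (fun Q => (∑ k, (b k : ℤ) * (Q k : ℤ)) = c)
        (Fintype.piFinset (fun _ : Fin J => Finset.range (n+1))),
      Q ∉ Finset.filter (fun Q => (∑ k, (b k : ℤ) * (Q k : ℤ)) = c ∧ Q j ≠ 0)
        (Fintype.piFinset (fun _ : Fin J => Finset.range (n+1))) →
      (b j : ℝ) * (Q j : ℕ) * krW J q Q = 0 := by
    intro Q hQ hQ'
    simp only [Finset.mem_filter] at hQ hQ'
    have : Q j = 0 := by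
      by_contra h
      exact hQ' ⟨hQ.1, hQ.2, h⟩
    simp [this]
  rw [← Finset.sum_subset hsub hzero]
  refine Finset.sum_nbij' (fun Q => Function.update Q j (Q j - 1))
    (fun Q => Function.update Q j (Q j + 1)) ?_ ?_ ?_ ?_ ?_
  · intro Q hQ
    simp only [Finset.mem_filter, Fintype.mem_piFinset, mem_range] at hQ ⊢
    obtain ⟨hP, hcond, hQj⟩ := hQ
    constructor
    · intro k
      by_cases hk : k = j
      · subst hk; simp only [Function.update_self]
        have := hP k; omega
      · rw [Function.update_of_ne hk]; exact hP k
    · rw [sum_b_update, hcond]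
      have : ((Q j - 1 : ℕ) : ℤ) = (Q j : ℤ) - 1 := by omega
      rw [this]
      ring
  · intro Q hQ
    simp only [Finset.mem_filter, Fintype.mem_piFinset, mem_range] at hQ ⊢
    obtain ⟨hP, hcond⟩ := hQ
    have hQjle : (Q j : ℤ) ≤ c - b j := by
      have h1 : (b j : ℤ) * (Q j : ℤ) ≤ ∑ k, (b k : ℤ) * (Q k : ℤ) :=
        Finset.single_le_sum (f := fun k => (b k : ℤ) * (Q k : ℤ))
          (fun k _ => by positivity) (mem_univ j)
      have := hb j
      nlinarith [Int.ofNat_le.mpr this]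
    refine ⟨fun k => ?_, ?_, by simp⟩
    · by_cases hk : k = j
      · subst hk; simp only [Function.update_self]
        have h3 := hb k
        omega
      · rw [Function.update_of_ne hk]; exact hP k
    · rw [sum_b_update, hcond]
      push_cast
      ring
  · intro Q hQ
    simp only [Finset.mem_filter] at hQ
    funext k
    by_cases hk : k = j
    · subst hk
      simp only [Function.update_self, Function.update_idem]
      have h4 := hQ.2.2
      omega
    · simp [Function.update_of_ne hk]
  · intro Q hQ
    funext k
    by_cases hk : k = j
    · subst hk
      simp only [Function.update_self, Function.update_idem]
      omega
    · simp [Function.update_of_ne hk]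
  · intro Q hQ
    simp only [Finset.mem_filter] at hQ
    rw [mul_assoc, krW_update J q Q j hQ.2.2, mul_assoc]

/-- Kaufman–Roberts recursion: `g(c) = 0` for `c < 0`, `g(0) = 1`, and for
`1 ≤ c ≤ C`, `c · g(c) = ∑_{j=1}^J b_j q_j g(c - b_j)`. -/
theorem kaufman_roberts_recursion (J : ℕ) (b : Fin J → ℕ) (q : Fin J → ℝ) (C : ℤ)
    (hb : ∀ j, 1 ≤ b j) (hq : ∀ j, 0 < q j) :
    (∀ c : ℤ, c < 0 → occWeight J b q c = 0) ∧
    occWeight J b q 0 = 1 ∧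
    (∀ c : ℤ, 1 ≤ c → c ≤ C →
      (c : ℝ) * occWeight J b q c
        = ∑ j, (b j : ℝ) * q j * occWeight J b q (c - b j)) := by
  refine ⟨?_, ?_, ?_⟩
  · intro c hc
    rw [occWeight_eq_krG]
    exact krG_neg J b q c hc _
  · rw [occWeight_eq_krG]
    exact krG_zero J b q hb
  · intro c hc _
    rw [occWeight_eq_krG]
    calc (c : ℝ) * krG J b q c c.toNat
        = ∑ Q ∈ Fintype.piFinset (fun _ : Fin J => Finset.range (c.toNat + 1)),
            ∑ j, (if (∑ k, (b k : ℤ) * (Q k : ℤ)) = c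
              then ((b j : ℝ) * (Q j : ℕ)) * krW J q Q else 0) := by
          unfold krG
          rw [Finset.mul_sum]
          refine Finset.sum_congr rfl fun Q _ => ?_
          by_cases h : (∑ k, (b k : ℤ) * (Q k : ℤ)) = c
          · simp only [if_pos h]
            rw [← Finset.sum_mul]
            congr 1
            have : ((∑ k, (b k : ℤ) * (Q k : ℤ) : ℤ) : ℝ) = (c : ℝ) := by
              rw [h]
            push_cast at this
            linarith [this]
          · simp [h]
      _ = ∑ j, ∑ Q ∈ Fintype.piFinset (fun _ : Fin J => Finset.range (c.toNat + 1)),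
            (if (∑ k, (b k : ℤ) * (Q k : ℤ)) = c
              then ((b j : ℝ) * (Q j : ℕ)) * krW J q Q else 0) := Finset.sum_comm
      _ = ∑ j, (b j : ℝ) * q j * krG J b q (c - b j) c.toNat :=
          Finset.sum_congr rfl fun j _ => krG_key J b q hb j c hc
      _ = ∑ j, (b j : ℝ) * q j * occWeight J b q (c - b j) := by
          refine Finset.sum_congr rfl fun j _ => ?_
          rw [occWeight_eq_krG,
            krG_stable J b q (c - b j) hb (Int.self_le_toNat _)
              (Int.toNat_le_toNat (by omega))]
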